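/- Assume the poset of contexts of A satisfies the descending chain condition: every decreasing sequence C₁ ⊇ C₂ ⊇ C₃ ⊇ ⋯ of contexts is eventually constant. Then Σ* is a sober space: every nonempty irreducible closed subset of Σ* is the closure of a unique point of Σ*. In particular this holds whenever A is finite-dimensional. -/
import Mathlib


open WeakDual

variable (A : Type*) [CStarAlgebra A]

/-- A classical context: a commutative unital closed star-subalgebra of `A`. -/
structure Context where
  carrier : Subalgebra ℂ A
  star_mem' : ∀ x ∈ carrier, star x ∈ carrier
  isClosed' : IsClosed (carrier : Set A)
  mul_comm' : ∀ x ∈ carrier, ∀ y ∈ carrier, x * y = y * x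

variable {A}

/-- The Gelfand spectrum of a context: the character space of `C`. -/
abbrev Context.Spec (C : Context A) : Type _ := characterSpace ℂ C.carrier

/-- The inclusion of a smaller context into a larger one, as a continuous linear map. -/
def Context.inclCLM {D C : Context A} (h : D.carrier ≤ C.carrier) :
    D.carrier →L[ℂ] C.carrier where
  toLinearMap := (Subalgebra.inclusion h).toLinearMap
  cont := continuous_induced_rng.mpr continuous_subtype_val

/-- Restriction of a character along an inclusion of contexts. -/
noncomputable def Context.restrictChar {D C : Context A} (h : D.carrier ≤ C.carrier)
    (lam : C.Spec) : D.Spec :=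
  ⟨(lam : WeakDual ℂ C.carrier).comp (Context.inclCLM h), by
    constructor
    · intro h0
      have h1 : (lam : WeakDual ℂ C.carrier).comp (Context.inclCLM h) (1 : D.carrier) = 0 := by
        rw [h0]; rfl
      have h2 : (lam : WeakDual ℂ C.carrier).comp (Context.inclCLM h) (1 : D.carrier) = 1 := by
        show lam ((Context.inclCLM h) (1 : D.carrier)) = 1
        have h3 : (Context.inclCLM h) (1 : D.carrier) = (1 : C.carrier) := rfl
        rw [h3]
        exact map_one lam
      rw [h1] at h2
      exact zero_ne_one h2
    · intro x y
      show lam ((Context.inclCLM h) (x * y)) = lam ((Context.inclCLM h) x) * lam ((Context.inclCLM h) y)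
      have h4 : (Context.inclCLM h) (x * y) = (Context.inclCLM h) x * (Context.inclCLM h) y := rfl
      rw [h4]
      exact map_mul lam _ _⟩

/-- The disjoint union of all Gelfand spectra of contexts. -/
abbrev SigmaSpace (A : Type*) [CStarAlgebra A] : Type _ := (C : Context A) × C.Spec

/-- The topology on the poset of contexts whose opens are the downward closed sets. -/
instance : TopologicalSpace (Context A) where
  IsOpen s := ∀ C ∈ s, ∀ D : Context A, D.carrier ≤ C.carrier → D ∈ s
  isOpen_univ := fun _ _ _ _ => trivial
  isOpen_inter := fun s t hs ht C hC D hD => ⟨hs C hC.1 D hD, ht C hC.2 D hD⟩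
  isOpen_sUnion := fun S hS C hC D hD => by
    obtain ⟨s, hsS, hCs⟩ := hC
    exact ⟨s, hsS, hS s hsS C hCs D hD⟩

/-- The topology `𝒪 Σ*` of the contravariant approach: a set is open iff each of its fibres
is open and it is closed under restriction of characters to smaller contexts. -/
instance : TopologicalSpace (SigmaSpace A) where
  IsOpen U := (∀ C : Context A, IsOpen {lam : C.Spec | Sigma.mk C lam ∈ U}) ∧
    ∀ (C D : Context A) (h : D.carrier ≤ C.carrier) (lam : C.Spec),
      Sigma.mk C lam ∈ U → Sigma.mk D (Context.restrictChar h lam) ∈ U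
  isOpen_univ := ⟨fun _ => isOpen_univ, fun _ _ _ _ _ => trivial⟩
  isOpen_inter := fun U V hU hV => ⟨fun C => (hU.1 C).inter (hV.1 C),
    fun C D h lam hm => ⟨hU.2 C D h lam hm.1, hV.2 C D h lam hm.2⟩⟩
  isOpen_sUnion := fun S hS => by
    constructor
    · intro C
      have h1 : {lam : C.Spec | Sigma.mk C lam ∈ ⋃₀ S} =
          ⋃ U ∈ S, {lam : C.Spec | Sigma.mk C lam ∈ U} := by
        ext lam; simp
      rw [h1]
      exact isOpen_biUnion fun U hU => (hS U hU).1 C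
    · rintro C D h lam ⟨U, hUS, hmU⟩
      exact ⟨U, hUS, (hS U hUS).2 C D h lam hmU⟩


lemma Context.ext' {C D : Context A} (h : C.carrier = D.carrier) : C = D := by
  cases C; cases D; simpa using h

lemma restrictChar_self {C : Context A} (h : C.carrier ≤ C.carrier) (lam : C.Spec) :
    Context.restrictChar h lam = lam := rfl

lemma restrictChar_trans {E D C : Context A} (h1 : E.carrier ≤ D.carrier)
    (h2 : D.carrier ≤ C.carrier) (lam : C.Spec) :
    Context.restrictChar h1 (Context.restrictChar h2 lam) =
      Context.restrictChar (h1.trans h2) lam := rfl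

lemma continuous_restrictChar {D C : Context A} (h : D.carrier ≤ C.carrier) :
    Continuous (Context.restrictChar h : C.Spec → D.Spec) := by
  apply Continuous.subtype_mk
  apply WeakDual.continuous_of_continuous_eval
  intro y
  have : Continuous fun a : C.Spec => (a : WeakDual ℂ C.carrier) (Context.inclCLM h y) :=
    (WeakDual.eval_continuous _).comp continuous_subtype_val
  exact this

lemma isOpen_sigmaSpace_iff {U : Set (SigmaSpace A)} : IsOpen U ↔
    ((∀ C : Context A, IsOpen {lam : C.Spec | Sigma.mk C lam ∈ U}) ∧
    ∀ (C D : Context A) (h : D.carrier ≤ C.carrier) (lam : C.Spec),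
      Sigma.mk C lam ∈ U → Sigma.mk D (Context.restrictChar h lam) ∈ U) := Iff.rfl

lemma mem_of_closed {F : Set (SigmaSpace A)} (hF : IsClosed F) {C D : Context A}
    (h : D.carrier ≤ C.carrier) {lam : C.Spec}
    (hm : Sigma.mk D (Context.restrictChar h lam) ∈ F) : Sigma.mk C lam ∈ F := by
  by_contra hc
  exact (isOpen_sigmaSpace_iff.mp hF.isOpen_compl).2 C D h lam hc hm

/-- The "upper set determined by a point" which will be the closure of a singleton. -/
lemma isClosed_upSet (C₀ : Context A) (lam₀ : C₀.Spec) :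
    IsClosed {q : SigmaSpace A |
      ∃ h : C₀.carrier ≤ q.1.carrier, Context.restrictChar h q.2 = lam₀} := by
  set S : Set (SigmaSpace A) :=
    {q | ∃ h : C₀.carrier ≤ q.1.carrier, Context.restrictChar h q.2 = lam₀}
  rw [← isOpen_compl_iff, isOpen_sigmaSpace_iff]
  constructor
  · intro C
    by_cases hC : C₀.carrier ≤ C.carrier
    · have he : {lam : C.Spec | Sigma.mk C lam ∈ Sᶜ} =
          (Context.restrictChar hC ⁻¹' {lam₀})ᶜ := by
        ext lam
        simp only [S, Set.mem_compl_iff, Set.mem_setOf_eq, Set.mem_preimage,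
          Set.mem_singleton_iff]
        constructor
        · intro hne heq; exact hne ⟨hC, heq⟩
        · rintro hne ⟨h, heq⟩; exact hne heq
      rw [he]
      exact (isClosed_singleton.preimage (continuous_restrictChar hC)).isOpen_compl
    · have he : {lam : C.Spec | Sigma.mk C lam ∈ Sᶜ} = Set.univ := by
        ext lam
        simp only [S, Set.mem_compl_iff, Set.mem_setOf_eq, Set.mem_univ, iff_true]
        rintro ⟨h, -⟩; exact hC h
      rw [he]; exact isOpen_univ
  · rintro C D h lam hC hmem
    obtain ⟨h', heq⟩ := hmem
    exact hC ⟨h'.trans h, by rw [← heq]; rfl⟩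

lemma closure_singleton_eq (C₀ : Context A) (lam₀ : C₀.Spec) :
    closure {Sigma.mk C₀ lam₀} = {q : SigmaSpace A |
      ∃ h : C₀.carrier ≤ q.1.carrier, Context.restrictChar h q.2 = lam₀} := by
  apply subset_antisymm
  · refine closure_minimal ?_ (isClosed_upSet C₀ lam₀)
    exact Set.singleton_subset_iff.mpr ⟨le_rfl, rfl⟩
  · rintro ⟨C, lam⟩ ⟨h, rfl⟩
    exact mem_of_closed isClosed_closure h (subset_closure rfl)

lemma exists_minimal
    (hdcc : ∀ f : ℕ → Context A, (∀ k, (f (k + 1)).carrier ≤ (f k).carrier) →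
      ∃ N, ∀ m, N ≤ m → f m = f N)
    {S : Set (Context A)} (hS : S.Nonempty) :
    ∃ C ∈ S, ∀ D ∈ S, D.carrier ≤ C.carrier → D = C := by
  by_contra hc
  push_neg at hc
  choose g hg1 hg2 hg3 using hc
  obtain ⟨C0, hC0⟩ := hS
  let f : ℕ → {C : Context A // C ∈ S} :=
    fun n => Nat.rec ⟨C0, hC0⟩ (fun _ p => ⟨g p.1 p.2, hg1 p.1 p.2⟩) n
  obtain ⟨N, hN⟩ := hdcc (fun n => (f n).1) (fun k => hg2 (f k).1 (f k).2)
  exact hg3 (f N).1 (f N).2 (hN (N + 1) (Nat.le_succ N))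

/-- If the poset of contexts of `A` satisfies the descending chain
condition (every decreasing sequence of contexts is eventually constant), then `Σ*` is a
sober space: every irreducible closed subset is the closure of a unique point. -/
theorem statement14
    (hdcc : ∀ f : ℕ → Context A, (∀ k, (f (k + 1)).carrier ≤ (f k).carrier) →
      ∃ N, ∀ m, N ≤ m → f m = f N) :
    ∀ F : Set (SigmaSpace A), IsClosed F → IsIrreducible F →
      ∃! p : SigmaSpace A, F = closure {p} := by
  intro F hFc hFi
  obtain ⟨⟨⟨Cw, lamw⟩, hw⟩, hpre⟩ := hFi
  obtain ⟨C₀, hC₀mem, hC₀min⟩ := exists_minimal hdcc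
    (S := {C : Context A | ∃ lam : C.Spec, Sigma.mk C lam ∈ F}) ⟨Cw, lamw, hw⟩
  -- down-sets are open
  have hdown : ∀ C : Context A, IsOpen {q : SigmaSpace A | q.1.carrier ≤ C.carrier} := by
    intro C
    rw [isOpen_sigmaSpace_iff]
    refine ⟨fun D => ?_, fun D D' h lam hm => h.trans hm⟩
    by_cases hD : D.carrier ≤ C.carrier
    · simp [hD]
    · simp [hD]
  -- C₀ is the least context whose fibre meets F
  have hleast : ∀ (C : Context A) (lam : C.Spec), Sigma.mk C lam ∈ F →
      C₀.carrier ≤ C.carrier := by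
    intro C lam hCl
    obtain ⟨lam₀', h₀'⟩ := hC₀mem
    obtain ⟨⟨D, mu⟩, hDF, hD1, hD2⟩ := hpre _ _ (hdown C₀) (hdown C)
      ⟨⟨C₀, lam₀'⟩, h₀', show C₀.carrier ≤ C₀.carrier from le_rfl⟩
      ⟨⟨C, lam⟩, hCl, show C.carrier ≤ C.carrier from le_rfl⟩
    have hDeq : D = C₀ := hC₀min D ⟨mu, hDF⟩ hD1
    exact hDeq ▸ hD2
  -- the basic open sets pulled back from the spectrum of C₀
  have hUV : ∀ V : Set C₀.Spec, IsOpen V →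
      IsOpen {q : SigmaSpace A |
        ∀ h : C₀.carrier ≤ q.1.carrier, Context.restrictChar h q.2 ∈ V} := by
    intro V hV
    rw [isOpen_sigmaSpace_iff]
    constructor
    · intro C
      by_cases hC : C₀.carrier ≤ C.carrier
      · have he : {lam : C.Spec | Sigma.mk C lam ∈ {q : SigmaSpace A |
            ∀ h : C₀.carrier ≤ q.1.carrier, Context.restrictChar h q.2 ∈ V}} =
            Context.restrictChar hC ⁻¹' V := by
          ext lam
          exact ⟨fun h => h hC, fun h h' => h⟩
        rw [he]
        exact hV.preimage (continuous_restrictChar hC)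
      · have he : {lam : C.Spec | Sigma.mk C lam ∈ {q : SigmaSpace A |
            ∀ h : C₀.carrier ≤ q.1.carrier, Context.restrictChar h q.2 ∈ V}} =
            Set.univ := by
          ext lam
          simp only [Set.mem_setOf_eq, Set.mem_univ, iff_true]
          intro h'
          exact absurd h' hC
        rw [he]
        exact isOpen_univ
    · intro C D h lam hm h'
      exact hm (h'.trans h)
  -- any point of F restricts over C₀ to any point of the fibre of F over C₀
  have hkey : ∀ (C : Context A) (lam : C.Spec), Sigma.mk C lam ∈ F →
      ∀ (l₀ : C₀.Spec), Sigma.mk C₀ l₀ ∈ F → ∀ (h : C₀.carrier ≤ C.carrier),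
      Context.restrictChar h lam = l₀ := by
    intro C lam hCl l₀ h₀ h
    by_contra hne
    obtain ⟨V, V', hVo, hV'o, hmV, hmV', hdisj⟩ := t2_separation hne
    obtain ⟨⟨D, mu⟩, hDF, hD1, hD2⟩ := hpre _ _ (hUV V hVo) (hUV V' hV'o)
      ⟨⟨C, lam⟩, hCl, fun _ => hmV⟩ ⟨⟨C₀, l₀⟩, h₀, fun _ => hmV'⟩
    have hD : C₀.carrier ≤ D.carrier := hleast D mu hDF
    exact Set.disjoint_left.mp hdisj (hD1 hD) (hD2 hD)
  obtain ⟨lam₀, h₀⟩ := hC₀mem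
  have hFeq : F = {q : SigmaSpace A |
      ∃ h : C₀.carrier ≤ q.1.carrier, Context.restrictChar h q.2 = lam₀} := by
    ext ⟨C, lam⟩
    constructor
    · intro hm
      exact ⟨hleast C lam hm, hkey C lam hm lam₀ h₀ _⟩
    · rintro ⟨h, heq⟩
      exact mem_of_closed hFc h (by rw [heq]; exact h₀)
  refine ⟨⟨C₀, lam₀⟩, ?_, ?_⟩
  · exact hFeq.trans (closure_singleton_eq C₀ lam₀).symm
  · rintro ⟨C', lam'⟩ hq
    have h1 : (⟨C', lam'⟩ : SigmaSpace A) ∈ F := hq ▸ subset_closure rfl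
    have h2 : (⟨C₀, lam₀⟩ : SigmaSpace A) ∈ closure {(⟨C', lam'⟩ : SigmaSpace A)} :=
      hq ▸ h₀
    rw [closure_singleton_eq] at h2
    obtain ⟨h', heq'⟩ := h2
    have hle : C₀.carrier ≤ C'.carrier := hleast C' lam' h1
    have hCe : C' = C₀ := Context.ext' (le_antisymm h' hle)
    subst hCe
    exact congrArg (Sigma.mk C') heq'.symm
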